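/- The complex Gaussian integral formula: for any real r > 0 and any complex s, the integral over the real line of exp(πi(r x² + s x)) dx equals e^{πi/4} · e^{-πi s²/(4r)} / √r (interpreted as an improper/oscillatory integral, e.g. as the limit of integrals of exp(πi(r x² + sx) - εx²) as ε → 0⁺). -/

import Mathlib

open MeasureTheory Real Complex Filter

/-- Complex Gaussian (Fresnel) integral formula, with Gaussian regularization:
for `r > 0` real and `s ∈ ℂ`,
`lim_{ε→0⁺} ∫ exp(πi(r x² + s x)) e^{-εx²} dx = e^{πi/4} e^{-πi s²/(4r)} / √r`. -/
theorem fresnel_gaussian_integral (r : ℝ) (hr : 0 < r) (s : ℂ) :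
    Tendsto
      (fun ε : ℝ => ∫ x : ℝ,
        Complex.exp ((π : ℂ) * Complex.I * (r * (x : ℂ) ^ 2 + s * x)) *
          Complex.exp (-(ε : ℂ) * (x : ℂ) ^ 2))
      (nhdsWithin 0 (Set.Ioi 0))
      (nhds (Complex.exp ((π : ℂ) * Complex.I / 4) *
        Complex.exp (-(π : ℂ) * Complex.I * s ^ 2 / (4 * (r : ℂ))) / (Real.sqrt r : ℂ))) := by
  have hπ : (0:ℝ) < π := Real.pi_pos
  set F : ℝ → ℂ := fun ε =>
    ((π : ℂ) / -((π : ℂ) * Complex.I * r - ε)) ^ ((1:ℂ)/2) *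
      Complex.exp ((0:ℂ) - ((π : ℂ) * Complex.I * s) ^ 2 /
        (4 * ((π : ℂ) * Complex.I * r - ε))) with hF
  have hb0 : ((π : ℂ) * Complex.I * r) ≠ 0 := by
    simp [Complex.ext_iff, hπ.ne', hr.ne']
  have key : ∀ ε ∈ Set.Ioi (0:ℝ),
      (∫ x : ℝ, Complex.exp ((π : ℂ) * Complex.I * (r * (x : ℂ) ^ 2 + s * x)) *
        Complex.exp (-(ε : ℂ) * (x : ℂ) ^ 2)) = F ε := by
    intro ε hε
    have hb : (((π : ℂ) * Complex.I * r - ε)).re < 0 := by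
      simp only [Complex.sub_re, Complex.mul_re, Complex.mul_im, Complex.ofReal_re,
        Complex.ofReal_im, Complex.I_re, Complex.I_im]
      simpa using hε
    simp only [hF]
    rw [← integral_cexp_quadratic hb ((π : ℂ) * Complex.I * s) 0]
    congr 1 with x
    rw [← Complex.exp_add]
    congr 1
    ring
  have hcont : Tendsto F (nhdsWithin 0 (Set.Ioi 0)) (nhds (F 0)) := by
    apply tendsto_nhdsWithin_of_tendsto_nhds
    apply Tendsto.mul
    · apply Tendsto.comp (continuousAt_cpow_const ?_)
      · apply Tendsto.div tendsto_const_nhds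
        · exact (tendsto_const_nhds.sub (Complex.continuous_ofReal.tendsto 0)).neg
        · rw [Complex.ofReal_zero, sub_zero]
          exact neg_ne_zero.mpr hb0
      · rw [Complex.mem_slitPlane_iff]
        right
        rw [Complex.ofReal_zero, sub_zero]
        have h1 : ((π:ℂ) / -((π:ℂ) * Complex.I * r)) = Complex.I / r := by
          rw [div_eq_div_iff (neg_ne_zero.mpr hb0) (Complex.ofReal_ne_zero.mpr hr.ne')]
          linear_combination (π:ℂ) * r * Complex.I_sq
        rw [h1, Complex.div_ofReal_im, Complex.I_im]
        simp [hr.ne']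
    · apply Tendsto.comp (Complex.continuous_exp.tendsto _)
      apply Tendsto.sub tendsto_const_nhds
      apply Tendsto.div tendsto_const_nhds
      · exact tendsto_const_nhds.mul
          (tendsto_const_nhds.sub (Complex.continuous_ofReal.tendsto 0))
      · rw [Complex.ofReal_zero, sub_zero]
        simpa using hb0
  have hF0 : F 0 = Complex.exp ((π : ℂ) * Complex.I / 4) *
      Complex.exp (-(π : ℂ) * Complex.I * s ^ 2 / (4 * (r : ℂ))) / (Real.sqrt r : ℂ) := by
    simp only [hF, Complex.ofReal_zero, sub_zero, zero_sub]
    have h1 : ((π:ℂ) / -((π:ℂ) * Complex.I * r)) = Complex.I / r := by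
      rw [div_eq_div_iff (neg_ne_zero.mpr hb0) (Complex.ofReal_ne_zero.mpr hr.ne')]
      linear_combination (π:ℂ) * r * Complex.I_sq
    have h2 : -(((π : ℂ) * Complex.I * s) ^ 2 / (4 * ((π : ℂ) * Complex.I * r))) =
        -(π : ℂ) * Complex.I * s ^ 2 / (4 * (r : ℂ)) := by
      rw [← neg_div, div_eq_div_iff
        (by simpa using hb0) (by simpa using (Complex.ofReal_ne_zero.mpr hr.ne'))]
      ring
    have h3 : (Complex.I / (r:ℂ)) ^ ((1:ℂ)/2) =
        Complex.exp ((π : ℂ) * Complex.I / 4) / (Real.sqrt r : ℂ) := by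
      have hz : Complex.I / (r:ℂ) ≠ 0 :=
        div_ne_zero Complex.I_ne_zero (Complex.ofReal_ne_zero.mpr hr.ne')
      have harg : Complex.arg (Complex.I / r) = π / 2 := by
        rw [show Complex.I / (r:ℂ) = ((r⁻¹ : ℝ) : ℂ) * Complex.I by
          push_cast; field_simp]
        rw [Complex.arg_real_mul _ (inv_pos.mpr hr), Complex.arg_I]
      have habs : ‖Complex.I / (r:ℂ)‖ = 1 / r := by
        simp [abs_of_pos hr]
      rw [Complex.cpow_def_of_ne_zero hz, Complex.log, habs, harg]
      rw [show ((Real.log (1/r) : ℂ) + ((π/2 : ℝ) : ℂ) * Complex.I) * ((1:ℂ)/2)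
          = ((Real.log (1/r) / 2 : ℝ) : ℂ) + (π:ℂ) * Complex.I / 4 by push_cast; ring]
      rw [Complex.exp_add, ← Complex.ofReal_exp]
      have h4 : Real.exp (Real.log (1/r) / 2) = 1 / Real.sqrt r := by
        rw [show Real.log (1/r) / 2 = Real.log (1/r) * (1/2) by ring,
          ← Real.rpow_def_of_pos (by positivity), ← Real.sqrt_eq_rpow, one_div,
          Real.sqrt_inv, one_div]
      rw [h4]
      push_cast
      ring
    rw [h1, h2, h3]
    ring
  rw [← hF0]
  exact hcont.congr' (eventually_nhdsWithin_of_forall fun ε hε => (key ε hε).symm)
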